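/- An MDS code with parameters (k, n-k) cannot have block locality smaller than k; that is, if every coded block is a function of at most r other coded blocks and any k of the n coded blocks determine the file, then r ≥ k. -/

import Mathlib

/-- An MDS code with parameters (k, n-k) cannot have block locality
smaller than k.  Blocks are modelled as an entropy function `H` on subsets of the
`n` coded blocks, each block having entropy `M/k`; MDS means any `k` blocks have
entropy (at least) `M`; locality `r` means every block is a function of at most
`r` other blocks. -/
theorem stmt_0 (n k r : ℕ) (M : ℝ) (hM : 0 < M) (hk : 0 < k) (hkn : k ≤ n)
    (H : Finset (Fin n) → ℝ)
    (hH0 : H ∅ = 0)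
    (hmono : ∀ S T : Finset (Fin n), S ⊆ T → H S ≤ H T)
    (hsub : ∀ S T : Finset (Fin n), H (S ∪ T) + H (S ∩ T) ≤ H S + H T)
    (hsingle : ∀ i : Fin n, H {i} = M / k)
    (hMDS : ∀ S : Finset (Fin n), S.card = k → M ≤ H S)
    (hloc : ∀ i : Fin n, ∃ R : Finset (Fin n),
      i ∉ R ∧ R.card ≤ r ∧ H (insert i R) = H R) :
    k ≤ r := by
  by_contra hr
  push_neg at hr
  -- subadditivity
  have hsum : ∀ S : Finset (Fin n), H S ≤ S.card * (M / k) := by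
    intro S
    induction S using Finset.induction_on with
    | empty => simp [hH0]
    | @insert a S ha ih =>
      have h1 := hsub {a} S
      have h2 : H ({a} ∩ S) ≥ 0 := by
        have := hmono ∅ ({a} ∩ S) (Finset.empty_subset _)
        linarith [this, hH0.le, hH0.ge]
      rw [← Finset.insert_eq, hsingle a] at h1
      rw [Finset.card_insert_of_notMem ha]
      push_cast
      have : H (insert a S) ≤ M / k + H S := by linarith
      nlinarith
  have hn : 0 < n := lt_of_lt_of_le hk hkn
  set i : Fin n := ⟨0, hn⟩
  obtain ⟨R, hiR, hRr, hHR⟩ := hloc i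
  -- extend R to a set A of size k-1 avoiding i
  have hRsub : R ⊆ Finset.univ.erase i := by
    intro x hx
    exact Finset.mem_erase.mpr ⟨by rintro rfl; exact hiR hx, Finset.mem_univ x⟩
  have hcard : (Finset.univ.erase i : Finset (Fin n)).card = n - 1 := by
    rw [Finset.card_erase_of_mem (Finset.mem_univ i), Finset.card_univ, Fintype.card_fin]
  obtain ⟨A, hRA, hAsub, hAcard⟩ :
      ∃ A, R ⊆ A ∧ A ⊆ Finset.univ.erase i ∧ A.card = k - 1 := by
    apply Finset.exists_subsuperset_card_eq (n := k - 1 - R.card + R.card) hRsub (by omega) ?_ |>.imp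
    · intro A ⟨h1, h2, h3⟩
      refine ⟨h1, h2, ?_⟩
      rw [h3]
      omega
    · rw [hcard]; omega
  have hiA : i ∉ A := fun h => (Finset.mem_erase.mp (hAsub h)).1 rfl
  have hkA : (insert i A).card = k := by
    rw [Finset.card_insert_of_notMem hiA, hAcard]; omega
  have hMle : M ≤ H (insert i A) := hMDS _ hkA
  -- locality: H (insert i A) ≤ H A
  have hunion : A ∪ insert i R = insert i A := by
    ext x
    simp only [Finset.mem_union, Finset.mem_insert]
    constructor
    · rintro (h | rfl | h)
      · exact Or.inr h
      · exact Or.inl rfl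
      · exact Or.inr (hRA h)
    · rintro (rfl | h)
      · exact Or.inr (Or.inl rfl)
      · exact Or.inl h
  have hinter : A ∩ insert i R = R := by
    ext x
    simp only [Finset.mem_inter, Finset.mem_insert]
    constructor
    · rintro ⟨hx, rfl | h⟩
      · exact absurd hx hiA
      · exact h
    · intro h
      exact ⟨hRA h, Or.inr h⟩
  have h3 := hsub A (insert i R)
  rw [hunion, hinter, hHR] at h3
  have h4 : H (insert i A) ≤ H A := by linarith
  have h5 := hsum A
  rw [hAcard] at h5
  have hk1 : ((k - 1 : ℕ) : ℝ) = (k : ℝ) - 1 := by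
    push_cast [Nat.cast_sub hk]; ring
  rw [hk1] at h5
  have hkR : (0 : ℝ) < k := by exact_mod_cast hk
  have : ((k : ℝ) - 1) * (M / k) < M := by
    rw [div_eq_mul_inv]
    nlinarith [mul_pos hM (inv_pos.mpr hkR), mul_inv_cancel₀ (ne_of_gt hkR)]
  linarith
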